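/- Let E be a nonempty finite set and α, β permutations of E. Form the bipartite graph G whose vertex set is the disjoint union of the set of α-orbits of E and the set of β-orbits of E, where an α-orbit x and a β-orbit y are adjacent if and only if there exists an edge e ∈ E whose α-orbit is x and whose β-orbit is y (and there are no other adjacencies). Then G is a connected graph if and only if the subgroup ⟨α, β⟩ of permutations of E generated by α and β acts transitively on E. -/

import Mathlib

open Equiv

/-- The setoid on `E` whose classes are the orbits of the permutation `α`. -/
def orbitSetoid {E : Type*} (α : Equiv.Perm E) : Setoid E :=
  ⟨α.SameCycle, ⟨fun _ => Equiv.Perm.SameCycle.refl α _,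
    fun h => h.symm, fun h h' => h.trans h'⟩⟩

/-- The bipartite graph whose vertices are the `α`-orbits and the `β`-orbits of `E`,
an `α`-orbit and a `β`-orbit being adjacent iff they are the orbits of a common
element `e ∈ E` (and with no other adjacencies). -/
def pairGraph {E : Type*} (α β : Equiv.Perm E) :
    SimpleGraph (Quotient (orbitSetoid α) ⊕ Quotient (orbitSetoid β)) where
  Adj v w :=
    (∃ e : E, v = Sum.inl (Quotient.mk (orbitSetoid α) e) ∧
        w = Sum.inr (Quotient.mk (orbitSetoid β) e)) ∨
    (∃ e : E, v = Sum.inr (Quotient.mk (orbitSetoid β) e) ∧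
        w = Sum.inl (Quotient.mk (orbitSetoid α) e))
  symm := by
    constructor
    rintro v w (⟨e, h1, h2⟩ | ⟨e, h1, h2⟩)
    · exact Or.inr ⟨e, h2, h1⟩
    · exact Or.inl ⟨e, h2, h1⟩
  loopless := by
    constructor
    rintro v (⟨e, h1, h2⟩ | ⟨e, h1, h2⟩) <;> simp [h1] at h2

/-- The bipartite graph of a pair of permutations of a nonempty finite set is
connected iff the subgroup generated by the two permutations acts transitively. -/
theorem pairGraph_connected_iff_transitive {E : Type*} [Fintype E] [Nonempty E]
    (α β : Equiv.Perm E) :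
    (pairGraph α β).Connected ↔
      ∀ x y : E, ∃ g ∈ Subgroup.closure ({α, β} : Set (Equiv.Perm E)), g x = y := by
  set H := Subgroup.closure ({α, β} : Set (Equiv.Perm E)) with hH
  have hα : α ∈ H := Subgroup.subset_closure (Or.inl rfl)
  have hβ : β ∈ H := Subgroup.subset_closure (Or.inr rfl)
  -- SameCycle implies reachable by an element of H
  have scα : ∀ x y : E, α.SameCycle x y → ∃ g ∈ H, g x = y := by
    rintro x y ⟨n, rfl⟩; exact ⟨α ^ n, Subgroup.zpow_mem H hα n, rfl⟩
  have scβ : ∀ x y : E, β.SameCycle x y → ∃ g ∈ H, g x = y := by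
    rintro x y ⟨n, rfl⟩; exact ⟨β ^ n, Subgroup.zpow_mem H hβ n, rfl⟩
  constructor
  · intro hconn x y
    have key : ∀ {v w : Quotient (orbitSetoid α) ⊕ Quotient (orbitSetoid β)},
        (pairGraph α β).Walk v w →
        ∀ a b : E,
          (v = Sum.inl (Quotient.mk (orbitSetoid α) a) ∨
            v = Sum.inr (Quotient.mk (orbitSetoid β) a)) →
          (w = Sum.inl (Quotient.mk (orbitSetoid α) b) ∨
            w = Sum.inr (Quotient.mk (orbitSetoid β) b)) →
          ∃ g ∈ H, g a = b := by
      intro v w p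
      induction p with
      | nil =>
        intro a b hv hw
        rcases hv with rfl | rfl <;> rcases hw with h | h <;>
          simp only [Sum.inl.injEq, Sum.inr.injEq, reduceCtorEq] at h
        · exact scα a b (Quotient.exact h)
        · exact scβ a b (Quotient.exact h)
      | @cons u v' w' hadj _ ih =>
        intro a b hv hw
        rcases hadj with ⟨e, he1, he2⟩ | ⟨e, he1, he2⟩
        · rcases hv with rfl | rfl
          · simp only [Sum.inl.injEq, reduceCtorEq] at he1
            obtain ⟨g1, hg1, hg1e⟩ := scα a e (Quotient.exact he1)
            obtain ⟨g2, hg2, hg2e⟩ := ih e b (Or.inr he2) hw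
            exact ⟨g2 * g1, H.mul_mem hg2 hg1, by simp [hg1e, hg2e]⟩
          · simp at he1
        · rcases hv with rfl | rfl
          · simp at he1
          · simp only [Sum.inr.injEq, reduceCtorEq] at he1
            obtain ⟨g1, hg1, hg1e⟩ := scβ a e (Quotient.exact he1)
            obtain ⟨g2, hg2, hg2e⟩ := ih e b (Or.inl he2) hw
            exact ⟨g2 * g1, H.mul_mem hg2 hg1, by simp [hg1e, hg2e]⟩
    exact key (hconn.preconnected _ _).some x y (Or.inl rfl) (Or.inl rfl)
  · intro htrans
    have hadjxx : ∀ x : E, (pairGraph α β).Adj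
        (Sum.inl (Quotient.mk (orbitSetoid α) x))
        (Sum.inr (Quotient.mk (orbitSetoid β) x)) :=
      fun x => Or.inl ⟨x, rfl, rfl⟩
    have main : ∀ x y : E, (pairGraph α β).Reachable
        (Sum.inl (Quotient.mk (orbitSetoid α) x))
        (Sum.inl (Quotient.mk (orbitSetoid α) y)) := by
      intro x y
      obtain ⟨g, hg, hgxy⟩ := htrans x y
      subst hgxy
      induction hg using Subgroup.closure_induction generalizing x with
      | mem g hg =>
        rcases hg with rfl | rfl
        · have h1 : Quotient.mk (orbitSetoid g) x = Quotient.mk (orbitSetoid g) (g x) :=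
            Quotient.sound ⟨1, by simp⟩
          rw [← h1]
        · have h1 : Quotient.mk (orbitSetoid g) x = Quotient.mk (orbitSetoid g) (g x) :=
            Quotient.sound ⟨1, by simp⟩
          refine (hadjxx x).reachable.trans ?_
          rw [h1]
          exact ((pairGraph _ _).adj_symm (hadjxx (g x))).reachable
      | one => simp only [Equiv.Perm.coe_one, id_eq]; exact SimpleGraph.Reachable.refl _
      | mul g1 g2 _ _ ih1 ih2 =>
        exact (ih2 x).trans (by simpa using ih1 (g2 x))
      | inv g _ ih =>
        have := (ih (g⁻¹ x)).symm
        simpa using this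
    rw [SimpleGraph.connected_iff]
    refine ⟨?_, ⟨Sum.inl (Quotient.mk (orbitSetoid α) (Classical.arbitrary E))⟩⟩
    intro v w
    obtain ⟨x, hx⟩ : ∃ x : E, v = Sum.inl (Quotient.mk (orbitSetoid α) x) ∨
        v = Sum.inr (Quotient.mk (orbitSetoid β) x) := by
      rcases v with q | q
      · obtain ⟨x, hx⟩ := q.exists_rep; exact ⟨x, Or.inl (by rw [← hx])⟩
      · obtain ⟨x, hx⟩ := q.exists_rep; exact ⟨x, Or.inr (by rw [← hx])⟩
    obtain ⟨y, hy⟩ : ∃ y : E, w = Sum.inl (Quotient.mk (orbitSetoid α) y) ∨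
        w = Sum.inr (Quotient.mk (orbitSetoid β) y) := by
      rcases w with q | q
      · obtain ⟨y, hy⟩ := q.exists_rep; exact ⟨y, Or.inl (by rw [← hy])⟩
      · obtain ⟨y, hy⟩ := q.exists_rep; exact ⟨y, Or.inr (by rw [← hy])⟩
    have hvx : (pairGraph α β).Reachable v (Sum.inl (Quotient.mk (orbitSetoid α) x)) := by
      rcases hx with rfl | rfl
      · rfl
      · exact ((pairGraph α β).adj_symm (hadjxx x)).reachable
    have hwy : (pairGraph α β).Reachable
        (Sum.inl (Quotient.mk (orbitSetoid α) y)) w := by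
      rcases hy with rfl | rfl
      · rfl
      · exact (hadjxx y).reachable
    exact (hvx.trans (main x y)).trans hwy
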